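/- Let γ ∈ (0, 1), let s = ⌈√(2/γ)⌉, and let z be a real number with z ≥ 1 + γ/2. Then the Chebyshev polynomial of the first kind satisfies T_s(z) ≥ 2. -/
import Mathlib

lemma cheb_closed (x d : ℝ) (h : d^2 = x^2 - 1) :
    ∀ n : ℕ, (Polynomial.Chebyshev.T ℝ (n : ℤ)).eval x = ((x+d)^n + (x-d)^n)/2 := by
  intro n
  induction n using Nat.twoStepInduction with
  | zero => simp [Polynomial.Chebyshev.T_zero]
  | one => simp [Polynomial.Chebyshev.T_one]
  | more n ih1 ih2 =>
    have hcast : ((n+2 : ℕ) : ℤ) = (n : ℤ) + 2 := by push_cast; ring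
    rw [hcast, Polynomial.Chebyshev.T_add_two]
    simp only [Polynomial.eval_sub, Polynomial.eval_mul, Polynomial.eval_ofNat,
      Polynomial.eval_X]
    have h1 : ((n+1 : ℕ) : ℤ) = (n : ℤ) + 1 := by push_cast; ring
    rw [← h1, ih2, ih1]
    linear_combination (-((x+d)^n + (x-d)^n)/2) * h

lemma bern3 (x : ℝ) (hx : 0 ≤ x) : ∀ n : ℕ,
    1 + n*x + n*(n-1)/2*x^2 + n*(n-1)*(n-2)/6*x^3 ≤ (1+x)^n := by
  intro n
  induction n with
  | zero => norm_num
  | succ k ih =>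
    have hC : (0:ℝ) ≤ (k:ℝ)*((k:ℝ)-1)*((k:ℝ)-2) := by
      rcases k with _|_|m
      · norm_num
      · norm_num
      · push_cast
        have h0 : (0:ℝ) ≤ (m:ℝ) := Nat.cast_nonneg m
        nlinarith [mul_nonneg (mul_nonneg (by linarith : (0:ℝ) ≤ (m:ℝ)+2) (by linarith : (0:ℝ) ≤ (m:ℝ)+1)) h0]
    have key : (1+x)*(1 + k*x + k*(k-1)/2*x^2 + k*(k-1)*(k-2)/6*x^3)
        = (1 + (k+1:ℕ)*x + (k+1:ℕ)*((k+1:ℕ)-1)/2*x^2 + (k+1:ℕ)*((k+1:ℕ)-1)*((k+1:ℕ)-2)/6*x^3)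
          + ((k:ℝ)*((k:ℝ)-1)*((k:ℝ)-2)/6)*x^4 := by
      push_cast; ring
    have h1 : (1 + (k+1:ℕ)*x + (k+1:ℕ)*((k+1:ℕ)-1)/2*x^2 + (k+1:ℕ)*((k+1:ℕ)-1)*((k+1:ℕ)-2)/6*x^3 : ℝ)
        ≤ (1+x)*(1 + k*x + k*(k-1)/2*x^2 + k*(k-1)*(k-2)/6*x^3) := by
      rw [key]
      nlinarith [mul_nonneg hC (pow_nonneg hx 4)]
    calc (1 + (k+1:ℕ)*x + (k+1:ℕ)*((k+1:ℕ)-1)/2*x^2 + (k+1:ℕ)*((k+1:ℕ)-1)*((k+1:ℕ)-2)/6*x^3 : ℝ)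
        ≤ (1+x)*(1 + k*x + k*(k-1)/2*x^2 + k*(k-1)*(k-2)/6*x^3) := h1
      _ ≤ (1+x)*(1+x)^k := mul_le_mul_of_nonneg_left ih (by linarith)
      _ = (1+x)^(k+1) := by ring

set_option maxHeartbeats 1000000 in
lemma main_poly (S u r q : ℝ) (hr : r^2 = 2) (hq : q^2 = 3)
    (hrl : 1.414 ≤ r) (hql : q ≤ 1.73206)
    (hu0 : 0 < u) (hu1 : u < 1) (hS2 : 2 ≤ S) (hsu : r ≤ S*u) :
    2 + q ≤ 1 + S*(u+u^2/2) + S*(S-1)/2*(u+u^2/2)^2 + S*(S-1)*(S-2)/6*(u+u^2/2)^3 := by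
  by_cases hc : r ≤ 2*u
  · have hu : r/2 ≤ u := by linarith
    have hxl : r/2 + 1/4 ≤ u+u^2/2 := by
      nlinarith [mul_nonneg (by linarith : (0:ℝ) ≤ u - r/2) (by positivity : (0:ℝ) ≤ u + r/2)]
    have hx0 : (0:ℝ) ≤ u+u^2/2 := by positivity
    have t1 : (0:ℝ) ≤ (S-2)*(u+u^2/2) := mul_nonneg (by linarith) hx0
    have t2 : (0:ℝ) ≤ (S-2)*(S+1)*(u+u^2/2)^2 :=
      mul_nonneg (mul_nonneg (by linarith) (by linarith)) (sq_nonneg _)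
    have t3 : (0:ℝ) ≤ S*(S-1)*(S-2)*(u+u^2/2)^3 :=
      mul_nonneg (mul_nonneg (mul_nonneg (by linarith) (by linarith)) (by linarith))
        (pow_nonneg hx0 3)
    have hsq : (r/2 + 1/4)*(r/2 + 1/4) ≤ (u+u^2/2)*(u+u^2/2) :=
      mul_le_mul hxl hxl (by linarith) (by linarith)
    nlinarith [t1, t2, t3, hsq]
  · push_neg at hc
    have hx0 : (0:ℝ) < u+u^2/2 := by positivity
    have ha : r * (1+u/2) ≤ S*(u+u^2/2) := by
      nlinarith [mul_nonneg (by linarith : (0:ℝ) ≤ S*u - r) (by linarith : (0:ℝ) ≤ 1+u/2)]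
    obtain ⟨x, hxdef⟩ : ∃ x, x = u+u^2/2 := ⟨_, rfl⟩
    rw [← hxdef] at ha ⊢
    obtain ⟨a, hadef⟩ : ∃ a, a = S*x := ⟨_, rfl⟩
    obtain ⟨b, hbdef⟩ : ∃ b, b = r*(1+u/2) := ⟨_, rfl⟩
    rw [← hadef, ← hbdef] at ha
    have hb2x : 2*x ≤ b := by
      rw [hbdef, hxdef]
      nlinarith [mul_nonneg (by linarith : (0:ℝ) ≤ r - 2*u) (by linarith : (0:ℝ) ≤ 1+u/2)]
    have hax : 2*x ≤ a := le_trans hb2x ha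
    have hx0' : (0:ℝ) < x := by rw [hxdef]; positivity
    have hgx : 1 + S*x + S*(S-1)/2*x^2 + S*(S-1)*(S-2)/6*x^3
        = 1 + a + a*(a-x)/2 + a*(a-x)*(a-2*x)/6 := by rw [hadef]; ring
    rw [hgx]
    have hmono : 1 + b + b*(b-x)/2 + b*(b-x)*(b-2*x)/6
        ≤ 1 + a + a*(a-x)/2 + a*(a-x)*(a-2*x)/6 := by
      have m1 : (0:ℝ) ≤ (a-b)*(a*(a-2*x)) :=
        mul_nonneg (by linarith) (mul_nonneg (by linarith) (by linarith))
      have m2 : (0:ℝ) ≤ (a-b)*(b*(b-2*x)) :=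
        mul_nonneg (by linarith) (mul_nonneg (by linarith) (by linarith))
      have m3 : (0:ℝ) ≤ (a-b)*((a-x)*(b-x)) :=
        mul_nonneg (by linarith) (mul_nonneg (by linarith) (by linarith))
      have m4 : (0:ℝ) ≤ (a-b)*(a+b-x) := mul_nonneg (by linarith) (by linarith)
      have m5 : (0:ℝ) ≤ a-b := by linarith
      nlinarith [m1, m2, m3, m4, m5]
    refine le_trans ?_ hmono
    rw [hbdef, hxdef]
    have n1 : (0:ℝ) ≤ (r - 2*u)*u := mul_nonneg (by linarith) (le_of_lt hu0)
    have n2 : (0:ℝ) ≤ (r - 2*u)*u*u := mul_nonneg n1 (le_of_lt hu0)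
    have n3 : (0:ℝ) ≤ (r - 2*u)*(r - 2*u)*u :=
      mul_nonneg (mul_nonneg (by linarith) (by linarith)) (le_of_lt hu0)
    have n4 : (0:ℝ) ≤ (r - 2*u)*u*u*u := mul_nonneg n2 (le_of_lt hu0)
    nlinarith [n1, n2, n3, n4, sq_nonneg (r - 2*u), sq_nonneg u, hr, hrl, hql]

lemma key_ineq (u : ℝ) (hu0 : 0 < u) (hu1 : u < 1) (s : ℕ) (hs2 : 2 ≤ s)
    (hsu : Real.sqrt 2 ≤ s * u) : 2 + Real.sqrt 3 ≤ (1 + (u + u^2/2))^s := by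
  have hS2 : (2:ℝ) ≤ (s:ℝ) := by exact_mod_cast hs2
  have h2 : Real.sqrt 2 ^ 2 = 2 := Real.sq_sqrt (by norm_num)
  have h3 : Real.sqrt 3 ^ 2 = 3 := Real.sq_sqrt (by norm_num)
  have h2l : 1.414 ≤ Real.sqrt 2 := by nlinarith [Real.sqrt_nonneg 2, h2]
  have h3u : Real.sqrt 3 ≤ 1.73206 := by nlinarith [Real.sqrt_nonneg 3, h3]
  have hB := bern3 (u + u^2/2) (by positivity) s
  refine le_trans ?_ hB
  exact main_poly (s:ℝ) u _ _ h2 h3 h2l h3u hu0 hu1 hS2 hsu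

set_option maxHeartbeats 1000000 in
/-- For `γ ∈ (0,1)`, `s = ⌈√(2/γ)⌉` and `z ≥ 1 + γ/2`, one has
`T_s(z) ≥ 2`. -/
theorem chebyshev_T_ceil_sqrt_ge_two (γ : ℝ) (hγ : γ ∈ Set.Ioo (0 : ℝ) 1)
    (z : ℝ) (hz : 1 + γ / 2 ≤ z) :
    (Polynomial.Chebyshev.T ℝ ((⌈Real.sqrt (2 / γ)⌉₊ : ℕ) : ℤ)).eval z ≥ 2 := by
  obtain ⟨hγ0, hγ1⟩ := hγ
  set s : ℕ := ⌈Real.sqrt (2 / γ)⌉₊ with hsdef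
  set u : ℝ := Real.sqrt γ with hudef
  have hu0 : 0 < u := Real.sqrt_pos.2 hγ0
  have hu1 : u < 1 := by
    rw [hudef]
    rw [show (1:ℝ) = Real.sqrt 1 from (Real.sqrt_one).symm]
    exact Real.sqrt_lt_sqrt (le_of_lt hγ0) hγ1
  have hu2 : u^2 = γ := Real.sq_sqrt (le_of_lt hγ0)
  -- s ≥ 2
  have hsqgt : (1:ℝ) < Real.sqrt (2/γ) := by
    have h1 : (1:ℝ) < 2/γ := by
      rw [lt_div_iff₀ hγ0]; linarith
    nlinarith [Real.sq_sqrt (by positivity : (0:ℝ) ≤ 2/γ), Real.sqrt_nonneg (2/γ)]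
  have hs2 : 2 ≤ s := by
    have := Nat.lt_ceil.2 (by exact_mod_cast hsqgt : ((1:ℕ):ℝ) < Real.sqrt (2/γ))
    omega
  -- s * u ≥ √2
  have hsu : Real.sqrt 2 ≤ (s:ℝ) * u := by
    have hsge : Real.sqrt (2/γ) ≤ (s:ℝ) := Nat.le_ceil _
    have hprod : Real.sqrt (2/γ) * u = Real.sqrt 2 := by
      rw [hudef, ← Real.sqrt_mul (by positivity : (0:ℝ) ≤ 2/γ)]
      rw [div_mul_cancel₀]
      exact ne_of_gt hγ0
    calc Real.sqrt 2 = Real.sqrt (2/γ) * u := hprod.symm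
      _ ≤ (s:ℝ) * u := mul_le_mul_of_nonneg_right hsge (le_of_lt hu0)
  -- setup d
  have hz1 : 1 ≤ z := by linarith
  have hz2 : 1 ≤ z^2 := by nlinarith
  set d : ℝ := Real.sqrt (z^2 - 1) with hddef
  have hd0 : 0 ≤ d := Real.sqrt_nonneg _
  have hd2 : d^2 = z^2 - 1 := Real.sq_sqrt (by linarith)
  have hcf := cheb_closed z d hd2 s
  rw [hcf]
  -- lower bound on w = z + d
  have hdu : u ≤ d := by
    rw [hddef]
    rw [show u = Real.sqrt (u^2) from (Real.sqrt_sq (le_of_lt hu0)).symm]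
    apply Real.sqrt_le_sqrt
    nlinarith [sq_nonneg u]
  have hw : 1 + (u + u^2/2) ≤ z + d := by
    have : 1 + u^2/2 ≤ z := by rw [hu2]; linarith
    linarith
  have hkey := key_ineq u hu0 hu1 s hs2 hsu
  have hwpow : (1 + (u + u^2/2))^s ≤ (z+d)^s :=
    pow_le_pow_left₀ (by positivity) hw s
  have h3 : Real.sqrt 3 ^ 2 = 3 := Real.sq_sqrt (by norm_num)
  have h3l : 1.7 ≤ Real.sqrt 3 := by nlinarith [Real.sqrt_nonneg 3, h3]
  have ht : 2 + Real.sqrt 3 ≤ (z+d)^s := le_trans hkey hwpow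
  have htv : (z+d)^s * (z-d)^s = 1 := by
    rw [← mul_pow]
    rw [show (z+d)*(z-d) = 1 by nlinarith [hd2]]
    exact one_pow s
  have hdz : d < z := by nlinarith [hd2]
  have hv0 : 0 < (z-d)^s := pow_pos (by linarith) s
  have ht0 : (0:ℝ) < (z+d)^s := by positivity
  have h4 : 4 ≤ (z+d)^s + (z-d)^s := by
    nlinarith [mul_nonneg (by nlinarith : (0:ℝ) ≤ (z+d)^s - 2 - Real.sqrt 3)
      (by nlinarith : (0:ℝ) ≤ (z+d)^s - 2 + Real.sqrt 3), htv, hv0, ht0]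
  linarith
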